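/- Pearson's chi-squared statistic of a two-way contingency table equals n times the squared L²-distance of the multilinear empirical copula density to 1: ∑_{k=1}^K ∑_{ℓ=1}^L (f_{kℓ} − f_{k+} f_{+ℓ})² / (f_{k+} f_{+ℓ}) = ∫₀¹ ∫₀¹ {ĉ(u,v) − 1}² dv du. -/

import Mathlib

open MeasureTheory Filter Topology

noncomputable section

lemma ae_eq_const_of_eqOn_Ioo {a b C : ℝ} (hab : a ≤ b) {g : ℝ → ℝ}
    (h : ∀ x ∈ Set.Ioo a b, g x = C) :
    ∀ᵐ x : ℝ, x ∈ Set.uIoc a b → g x = C := by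
  have hb : ∀ᵐ x : ℝ, x ≠ b := by
    rw [MeasureTheory.ae_iff]
    have : {x : ℝ | ¬ x ≠ b} = {b} := by ext x; simp
    rw [this]; exact Real.volume_singleton
  filter_upwards [hb] with x hx hmem
  rw [Set.uIoc_of_le hab] at hmem
  exact h x ⟨hmem.1, lt_of_le_of_ne hmem.2 hx⟩

lemma intervalIntegrable_of_eqOn_Ioo {a b C : ℝ} (hab : a ≤ b) {g : ℝ → ℝ}
    (h : ∀ x ∈ Set.Ioo a b, g x = C) :
    IntervalIntegrable g volume a b := by
  refine (intervalIntegrable_const (c := C) (a := a) (b := b) (μ := volume)).congr_ae ?_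
  have h2 : g =ᵐ[volume.restrict (Set.uIoc a b)] fun _ => C :=
    (ae_restrict_iff' measurableSet_uIoc).2 (ae_eq_const_of_eqOn_Ioo hab h)
  exact h2.symm

lemma integral_eq_of_eqOn_Ioo {a b C : ℝ} (hab : a ≤ b) {g : ℝ → ℝ}
    (h : ∀ x ∈ Set.Ioo a b, g x = C) :
    ∫ x in a..b, g x = (b - a) * C := by
  rw [intervalIntegral.integral_congr_ae (ae_eq_const_of_eqOn_Ioo hab h),
    intervalIntegral.integral_const, smul_eq_mul]

/-- Partition lemma: if `g` equals the constant `C i` on each `Ioo (a i) (a (i+1))`, then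
the integral from `a 0` to `a n` is the weighted sum. -/
lemma integral_partition {a : ℕ → ℝ} {n : ℕ} (ha : ∀ i < n, a i ≤ a (i + 1))
    {g : ℝ → ℝ} {C : ℕ → ℝ} (h : ∀ i < n, ∀ x ∈ Set.Ioo (a i) (a (i + 1)), g x = C i) :
    ∫ x in (a 0)..(a n), g x = ∑ i ∈ Finset.range n, (a (i + 1) - a i) * C i := by
  rw [← intervalIntegral.sum_integral_adjacent_intervals
      (fun i hi => intervalIntegrable_of_eqOn_Ioo (ha i hi) (h i hi))]
  exact Finset.sum_congr rfl fun i hi => by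
    exact integral_eq_of_eqOn_Ioo (ha i (Finset.mem_range.1 hi)) (h i (Finset.mem_range.1 hi))

/-- Pearson's chi-squared statistic of a `K × L` table of relative
frequencies equals the squared `L²`-distance of the multilinear empirical copula density
to `1`:
`∑_k ∑_ℓ (f_{kℓ} − f_{k+} f_{+ℓ})²/(f_{k+} f_{+ℓ}) = ∫₀¹∫₀¹ (ĉ(u,v) − 1)² dv du`,
where `ĉ(u,v) = f_{kℓ}/(f_{k+} f_{+ℓ})` on `(F_{(k−1)+}, F_{k+}) × (F_{+(ℓ−1)}, F_{+ℓ})`. -/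
theorem chiSq_eq_L2_distance_of_copula_density
    (K L : ℕ) (hK : 1 ≤ K) (hL : 1 ≤ L)
    (f : Fin K → Fin L → ℝ) (hf : ∀ k ℓ, 0 ≤ f k ℓ)
    (hsum : ∑ k : Fin K, ∑ ℓ : Fin L, f k ℓ = 1)
    (frow : Fin K → ℝ) (fcol : Fin L → ℝ)
    (hfrow : ∀ k, frow k = ∑ ℓ : Fin L, f k ℓ)
    (hfcol : ∀ ℓ, fcol ℓ = ∑ k : Fin K, f k ℓ)
    (hrowpos : ∀ k, 0 < frow k) (hcolpos : ∀ ℓ, 0 < fcol ℓ)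
    (Frow : ℕ → ℝ) (Fcol : ℕ → ℝ)
    (hFrow : ∀ m, Frow m = ∑ k : Fin K, if (k : ℕ) < m then frow k else 0)
    (hFcol : ∀ m, Fcol m = ∑ ℓ : Fin L, if (ℓ : ℕ) < m then fcol ℓ else 0)
    (c : ℝ → ℝ → ℝ)
    (hc : ∀ (k : Fin K) (ℓ : Fin L) (u v : ℝ),
      u ∈ Set.Ioo (Frow k) (Frow (k + 1)) → v ∈ Set.Ioo (Fcol ℓ) (Fcol (ℓ + 1)) →
      c u v = f k ℓ / (frow k * fcol ℓ)) :
    ∑ k : Fin K, ∑ ℓ : Fin L, (f k ℓ - frow k * fcol ℓ) ^ 2 / (frow k * fcol ℓ)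
      = ∫ u in (0:ℝ)..1, ∫ v in (0:ℝ)..1, (c u v - 1) ^ 2 := by
  -- basic facts about Frow, Fcol
  have hFrow0 : Frow 0 = 0 := by rw [hFrow]; simp
  have hFcol0 : Fcol 0 = 0 := by rw [hFcol]; simp
  have hFrowK : Frow K = 1 := by
    rw [hFrow]
    have : ∀ k : Fin K, (if (k : ℕ) < K then frow k else 0) = frow k := by
      intro k; simp [k.isLt]
    rw [Finset.sum_congr rfl fun k _ => this k]
    simp only [hfrow]; exact hsum
  have hFcolL : Fcol L = 1 := by
    rw [hFcol]
    have : ∀ ℓ : Fin L, (if (ℓ : ℕ) < L then fcol ℓ else 0) = fcol ℓ := by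
      intro ℓ; simp [ℓ.isLt]
    rw [Finset.sum_congr rfl fun ℓ _ => this ℓ]
    simp only [hfcol]
    rw [Finset.sum_comm]; exact hsum
  have hFrowstep : ∀ k : Fin K, Frow ((k : ℕ) + 1) - Frow k = frow k := by
    intro k
    rw [hFrow, hFrow, ← Finset.sum_sub_distrib]
    rw [Finset.sum_eq_single k]
    · simp [Nat.lt_succ_iff]
    · intro j _ hj
      have : (j : ℕ) ≠ (k : ℕ) := fun h => hj (Fin.ext h)
      rcases lt_or_gt_of_ne this with h | h
      · simp [h, Nat.lt_succ_of_lt h]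
      · have h1 : ¬ (j : ℕ) < (k : ℕ) + 1 := by omega
        have h2 : ¬ (j : ℕ) < (k : ℕ) := by omega
        simp [h1, h2]
    · intro h; exact absurd (Finset.mem_univ k) h
  have hFcolstep : ∀ ℓ : Fin L, Fcol ((ℓ : ℕ) + 1) - Fcol ℓ = fcol ℓ := by
    intro ℓ
    rw [hFcol, hFcol, ← Finset.sum_sub_distrib]
    rw [Finset.sum_eq_single ℓ]
    · simp [Nat.lt_succ_iff]
    · intro j _ hj
      have : (j : ℕ) ≠ (ℓ : ℕ) := fun h => hj (Fin.ext h)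
      rcases lt_or_gt_of_ne this with h | h
      · simp [h, Nat.lt_succ_of_lt h]
      · have h1 : ¬ (j : ℕ) < (ℓ : ℕ) + 1 := by omega
        have h2 : ¬ (j : ℕ) < (ℓ : ℕ) := by omega
        simp [h1, h2]
    · intro h; exact absurd (Finset.mem_univ ℓ) h
  have hFrowmono : ∀ i < K, Frow i ≤ Frow (i + 1) := by
    intro i hi
    have := hFrowstep ⟨i, hi⟩
    simp only at this
    nlinarith [hrowpos ⟨i, hi⟩]
  have hFcolmono : ∀ i < L, Fcol i ≤ Fcol (i + 1) := by
    intro i hi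
    have := hFcolstep ⟨i, hi⟩
    simp only at this
    nlinarith [hcolpos ⟨i, hi⟩]
  -- inner integral for u in the k-th strip
  have hinner : ∀ k : Fin K, ∀ u ∈ Set.Ioo (Frow k) (Frow ((k : ℕ) + 1)),
      (∫ v in (0:ℝ)..1, (c u v - 1) ^ 2)
        = ∑ ℓ : Fin L, fcol ℓ * (f k ℓ / (frow k * fcol ℓ) - 1) ^ 2 := by
    intro k u hu
    have key : ∫ v in (Fcol 0)..(Fcol L), (c u v - 1) ^ 2
        = ∑ i ∈ Finset.range L, (Fcol (i + 1) - Fcol i) *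
            (f k ⟨i % L, Nat.mod_lt _ (by omega)⟩ / (frow k * fcol ⟨i % L, Nat.mod_lt _ (by omega)⟩) - 1) ^ 2 := by
      refine integral_partition hFcolmono ?_
      intro i hi v hv
      have hiL : i % L = i := Nat.mod_eq_of_lt hi
      have : c u v = f k ⟨i, hi⟩ / (frow k * fcol ⟨i, hi⟩) := hc k ⟨i, hi⟩ u v hu hv
      rw [this]
      congr 2 <;> simp [hiL]
    rw [hFcol0, hFcolL] at key
    rw [key, ← Fin.sum_univ_eq_sum_range]
    refine Finset.sum_congr rfl fun ℓ _ => ?_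
    have hmod : (ℓ : ℕ) % L = (ℓ : ℕ) := Nat.mod_eq_of_lt ℓ.isLt
    have hcast : (⟨(ℓ : ℕ) % L, Nat.mod_lt _ (by omega)⟩ : Fin L) = ℓ :=
      Fin.ext (by simp [hmod])
    rw [hcast, hFcolstep ℓ]
  -- outer integral
  have houter : ∫ u in (Frow 0)..(Frow K), (∫ v in (0:ℝ)..1, (c u v - 1) ^ 2)
      = ∑ i ∈ Finset.range K, (Frow (i + 1) - Frow i) *
          (∑ ℓ : Fin L, fcol ℓ * (f ⟨i % K, Nat.mod_lt _ (by omega)⟩ ℓ / (frow ⟨i % K, Nat.mod_lt _ (by omega)⟩ * fcol ℓ) - 1) ^ 2) := by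
    refine integral_partition hFrowmono ?_
    intro i hi u hu
    have hiK : i % K = i := Nat.mod_eq_of_lt hi
    have := hinner ⟨i, hi⟩ u hu
    rw [this]
    refine Finset.sum_congr rfl fun ℓ _ => ?_
    congr 2 <;> simp [hiK]
  rw [hFrow0, hFrowK] at houter
  rw [houter, ← Fin.sum_univ_eq_sum_range]
  refine Finset.sum_congr rfl fun k _ => ?_
  have hmod : (k : ℕ) % K = (k : ℕ) := Nat.mod_eq_of_lt k.isLt
  rw [hFrowstep k, Finset.mul_sum]
  refine Finset.sum_congr rfl fun ℓ _ => ?_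
  have h1 := hrowpos k
  have h2 := hcolpos ℓ
  have hkeq : (⟨(k : ℕ) % K, Nat.mod_lt _ (by omega)⟩ : Fin K) = k := by
    simp [Fin.ext_iff, hmod]
  rw [hkeq]
  field_simp
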